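/- Let A be a C*-algebra that is not commutative (there exist a, b ∈ A with a·b ≠ b·a). Then there exist elements x, y ∈ A such that ‖x·x* + y·y*‖ ≠ ‖x*·x + y*·y‖. -/

import Mathlib

/-- **Akemann's theorem** (Theorem 8): if a C*-algebra `A` is not commutative, then there
exist `x, y ∈ A` with `‖x x* + y y*‖ ≠ ‖x* x + y* y‖`. -/
theorem akemann_noncommutative_norm_ineq (A : Type*) [CStarAlgebra A]
    (h : ∃ a b : A, a * b ≠ b * a) :
    ∃ x y : A, ‖x * star x + y * star y‖ ≠ ‖star x * x + star y * y‖ := by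
  by_contra hcon
  push_neg at hcon
  obtain ⟨a, b, hab⟩ := h
  haveI hnt : Nontrivial A := ⟨⟨a * b, b * a, hab⟩⟩
  letI := CStarAlgebra.spectralOrder A
  haveI := CStarAlgebra.spectralOrderedRing A
  -- Key step: `star x * x ≤ x * star x` for every `x`.
  have key : ∀ x : A, star x * x ≤ x * star x := by
    intro x
    set c : A := algebraMap ℝ A (‖x‖ ^ 2) with hc
    set p : A := c - x * star x with hp
    have hpnn : (0 : A) ≤ p := sub_nonneg.mpr CStarAlgebra.mul_star_le_algebraMap_norm_sq
    set y : A := CFC.sqrt p with hy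
    have hysa : IsSelfAdjoint y := IsSelfAdjoint.of_nonneg (CFC.sqrt_nonneg p)
    have hyy : y * y = p := CFC.sqrt_mul_sqrt_self p hpnn
    have hsum : x * star x + y * star y = c := by
      rw [hysa.star_eq, hyy, hp]; abel
    have h1 : ‖x * star x + y * star y‖ = ‖x‖ ^ 2 := by
      rw [hsum, hc, norm_algebraMap', Real.norm_eq_abs, abs_of_nonneg (sq_nonneg _)]
    have h2 : ‖star x * x + star y * y‖ = ‖x‖ ^ 2 := by
      rw [← hcon x y, h1]
    have hsa : IsSelfAdjoint (star x * x + star y * y) :=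
      (IsSelfAdjoint.star_mul_self x).add
        (by rw [hysa.star_eq, hyy]; exact IsSelfAdjoint.of_nonneg hpnn)
    have hle := hsa.le_algebraMap_norm_self
    rw [h2, ← hc] at hle
    rw [hysa.star_eq, hyy, hp] at hle
    have e : star x * x + (c - x * star x) = (star x * x - x * star x) + c := by abel
    rw [e] at hle
    exact sub_nonpos.mp (add_le_iff_nonpos_left.mp hle)
  -- Hence every element is normal.
  have normal : ∀ x : A, x * star x = star x * x := fun x =>
    le_antisymm (by simpa using key (star x)) (key x)
  -- Hence self-adjoint elements commute.
  have sacomm : ∀ p q : A, IsSelfAdjoint p → IsSelfAdjoint q → p * q = q * p := by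
    intro p q hps hqs
    set i : A := algebraMap ℂ A Complex.I with hi
    have hii : i * i = -1 := by
      rw [hi, ← map_mul, Complex.I_mul_I, map_neg, map_one]
    have hcomm : ∀ z : A, i * z = z * i := fun z => by
      rw [hi]; exact (Algebra.commutes Complex.I z)
    have histar : star i = -i := by
      rw [hi, ← algebraMap_star_comm, Complex.star_def, Complex.conj_I, map_neg]
    have hz := normal (p + i * q)
    have hstar : star (p + i * q) = p - i * q := by
      rw [star_add, star_mul, histar, hps.star_eq, hqs.star_eq, mul_neg, ← hcomm,
        sub_eq_add_neg]
    rw [hstar] at hz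
    have h1 : p * (i * q) = i * (p * q) := by rw [← mul_assoc, ← hcomm, mul_assoc]
    have h2 : (i * q) * (i * q) = -(q * q) := by
      calc (i * q) * (i * q) = i * (q * i) * q := by noncomm_ring
        _ = i * (i * q) * q := by rw [← hcomm q]
        _ = (i * i) * (q * q) := by noncomm_ring
        _ = -(q * q) := by rw [hii]; noncomm_ring
    have e1 : (p + i * q) * (p - i * q) =
        p * p - (i * (p * q) - i * (q * p)) + (q * q) := by
      calc (p + i * q) * (p - i * q)
          = p * p - p * (i * q) + (i * q) * p - (i * q) * (i * q) := by noncomm_ring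
        _ = p * p - i * (p * q) + i * (q * p) + q * q := by
            rw [h1, h2, mul_assoc]; abel
        _ = p * p - (i * (p * q) - i * (q * p)) + (q * q) := by abel
    have e2 : (p - i * q) * (p + i * q) =
        p * p + (i * (p * q) - i * (q * p)) + (q * q) := by
      calc (p - i * q) * (p + i * q)
          = p * p + p * (i * q) - (i * q) * p - (i * q) * (i * q) := by noncomm_ring
        _ = p * p + i * (p * q) - i * (q * p) + q * q := by
            rw [h1, h2, mul_assoc]; abel
        _ = p * p + (i * (p * q) - i * (q * p)) + (q * q) := by abel
    rw [e1, e2] at hz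
    set s : A := i * (p * q) - i * (q * p) with hs
    have h3 : p * p - s = p * p + s := add_right_cancel hz
    have h4 : -s = s := by
      have := h3
      rw [sub_eq_add_neg] at this
      exact add_left_cancel this
    have h5 : (2 : ℂ) • s = 0 := by
      rw [two_smul]
      nth_rewrite 1 [← h4]
      abel
    have h6 : s = 0 := by
      rcases smul_eq_zero.mp h5 with h | h
      · norm_num at h
      · exact h
    have h7 : i * (p * q) = i * (q * p) := sub_eq_zero.mp h6
    have hiu : IsUnit i := (isUnit_iff_ne_zero.mpr Complex.I_ne_zero).map (algebraMap ℂ A)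
    exact hiu.mul_left_cancel h7
  -- Hence the algebra is commutative: decompose into self-adjoint parts.
  have comm : ∀ u v : A, u * v = v * u := by
    intro u v
    have hP : IsSelfAdjoint (u + star u) := IsSelfAdjoint.add_star_self u
    have hQ : IsSelfAdjoint (v + star v) := IsSelfAdjoint.add_star_self v
    have hP' : IsSelfAdjoint (Complex.I • (u - star u)) := by
      rw [IsSelfAdjoint, star_smul, star_sub, star_star, Complex.star_def, Complex.conj_I,
        neg_smul, smul_sub, smul_sub, neg_sub]
    have hQ' : IsSelfAdjoint (Complex.I • (v - star v)) := by
      rw [IsSelfAdjoint, star_smul, star_sub, star_star, Complex.star_def, Complex.conj_I,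
        neg_smul, smul_sub, smul_sub, neg_sub]
    have hu : (2 : ℂ) • u = (u + star u) - Complex.I • (Complex.I • (u - star u)) := by
      rw [smul_smul, Complex.I_mul_I, neg_smul, one_smul, sub_neg_eq_add, two_smul]
      abel
    have hv : (2 : ℂ) • v = (v + star v) - Complex.I • (Complex.I • (v - star v)) := by
      rw [smul_smul, Complex.I_mul_I, neg_smul, one_smul, sub_neg_eq_add, two_smul]
      abel
    have c1 : Commute (u + star u) (v + star v) := sacomm _ _ hP hQ
    have c2 : Commute (u + star u) (Complex.I • (v - star v)) := sacomm _ _ hP hQ'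
    have c3 : Commute (Complex.I • (u - star u)) (v + star v) := sacomm _ _ hP' hQ
    have c4 : Commute (Complex.I • (u - star u)) (Complex.I • (v - star v)) :=
      sacomm _ _ hP' hQ'
    have cbig : ((2 : ℂ) • u) * ((2 : ℂ) • v) = ((2 : ℂ) • v) * ((2 : ℂ) • u) := by
      rw [hu, hv]
      exact (c1.sub_right (c2.smul_right Complex.I)).sub_left
        ((c3.sub_right (c4.smul_right Complex.I)).smul_left Complex.I)
    rw [smul_mul_assoc, smul_mul_assoc, mul_smul_comm, mul_smul_comm, smul_smul,
      smul_smul] at cbig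
    exact smul_right_injective A (by norm_num : (2 * 2 : ℂ) ≠ 0) cbig
  exact hab (comm a b)
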